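/- If $\beta_{p,q}$ and $\beta_{p+q,r}$ are independent random variables with Beta distributions of parameters $(p,q)$ and $(p+q,r)$ respectively, then their product $\beta_{p,q}\cdot\beta_{p+q,r}$ has the Beta distribution with parameters $(p, q+r)$. -/

import Mathlib

open MeasureTheory Real ProbabilityTheory
open scoped ENNReal NNReal BoundedContinuousFunction

/-- The Beta distribution with parameters `a, b`, given by its density
`Γ(a+b)/(Γ(a)Γ(b)) x^(a-1) (1-x)^(b-1)` on `(0,1)`. -/
noncomputable def betaM (a b : ℝ) : Measure ℝ :=
  volume.withDensity fun x =>
    ENNReal.ofReal ((Set.Ioo (0:ℝ) 1).indicator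
      (fun x => (Real.Gamma (a + b) / (Real.Gamma a * Real.Gamma b)) *
        x ^ (a - 1) * (1 - x) ^ (b - 1)) x)


lemma betaIntegrableOn {a b : ℝ} (ha : 0 < a) (hb : 0 < b) :
    IntegrableOn (fun x : ℝ => x ^ (a-1) * (1-x) ^ (b-1)) (Set.Ioc 0 1) volume := by
  have hc := (Complex.betaIntegral_convergent (u := a) (v := b) (by simpa) (by simpa)).1
  have := hc.re
  refine (IntegrableOn.congr_fun this ?_ measurableSet_Ioc)
  intro x hx
  have hx0 : (0:ℝ) ≤ x := hx.1.le
  have hx1 : (0:ℝ) ≤ 1 - x := by linarith [hx.2]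
  simp only [Function.comp]
  rw [show ((1:ℂ) - (x:ℂ)) = ((1 - x : ℝ) : ℂ) by push_cast; ring,
    show ((a:ℂ) - 1) = ((a - 1 : ℝ) : ℂ) by push_cast; ring,
    show ((b:ℂ) - 1) = ((b - 1 : ℝ) : ℂ) by push_cast; ring,
    ← Complex.ofReal_cpow hx0, ← Complex.ofReal_cpow hx1, ← Complex.ofReal_mul]
  simp

lemma betaIntegral_real {a b : ℝ} (ha : 0 < a) (hb : 0 < b) :
    ∫ x in Set.Ioc (0:ℝ) 1, x ^ (a-1) * (1-x) ^ (b-1) =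
      Real.Gamma a * Real.Gamma b / Real.Gamma (a+b) := by
  have key : Complex.betaIntegral a b =
      ((∫ x in Set.Ioc (0:ℝ) 1, x ^ (a-1) * (1-x) ^ (b-1) : ℝ) : ℂ) := by
    rw [Complex.betaIntegral, intervalIntegral.integral_of_le zero_le_one]
    refine Eq.trans (setIntegral_congr_fun measurableSet_Ioc (fun x hx => ?_)) integral_ofReal
    have hx0 : (0:ℝ) ≤ x := hx.1.le
    have hx1 : (0:ℝ) ≤ 1 - x := by linarith [hx.2]
    rw [show ((1:ℂ) - (x:ℂ)) = ((1 - x : ℝ) : ℂ) by push_cast; ring,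
      show ((a:ℂ) - 1) = ((a - 1 : ℝ) : ℂ) by push_cast; ring,
      show ((b:ℂ) - 1) = ((b - 1 : ℝ) : ℂ) by push_cast; ring,
      ← Complex.ofReal_cpow hx0, ← Complex.ofReal_cpow hx1, ← Complex.ofReal_mul]
    rfl
  have h2 := Complex.Gamma_mul_Gamma_eq_betaIntegral
    (s := a) (t := b) (by simpa) (by simpa)
  rw [key] at h2
  have hG : Real.Gamma (a+b) ≠ 0 := (Real.Gamma_pos_of_pos (by linarith)).ne'
  have h3 : ((Real.Gamma a * Real.Gamma b : ℝ) : ℂ)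
      = ((Real.Gamma (a+b) * ∫ x in Set.Ioc (0:ℝ) 1, x ^ (a-1) * (1-x) ^ (b-1) : ℝ) : ℂ) := by
    push_cast
    rw [Complex.Gamma_ofReal, Complex.Gamma_ofReal, ← Complex.ofReal_add, Complex.Gamma_ofReal] at h2
    exact_mod_cast h2
  have h4 := Complex.ofReal_injective h3
  field_simp
  linarith [h4]

noncomputable def betaD (a b : ℝ) : ℝ → ℝ := fun x =>
  (Set.Ioo (0:ℝ) 1).indicator
      (fun x => (Real.Gamma (a + b) / (Real.Gamma a * Real.Gamma b)) *
        x ^ (a - 1) * (1 - x) ^ (b - 1)) x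

lemma betaM_eq (a b : ℝ) :
    betaM a b = volume.withDensity fun x => ((betaD a b x).toNNReal : ℝ≥0∞) := rfl

lemma betaD_measurable (a b : ℝ) : Measurable (betaD a b) := by
  unfold betaD
  apply Measurable.indicator _ measurableSet_Ioo
  fun_prop

lemma betaD_nonneg {a b : ℝ} (ha : 0 < a) (hb : 0 < b) (x : ℝ) : 0 ≤ betaD a b x := by
  unfold betaD
  apply Set.indicator_nonneg
  intro y hy
  have hy0 : (0:ℝ) ≤ y := hy.1.le
  have hy1 : (0:ℝ) ≤ 1 - y := by linarith [hy.2]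
  have h1 : 0 < Real.Gamma (a+b) := Real.Gamma_pos_of_pos (by linarith)
  have h2 : 0 < Real.Gamma a := Real.Gamma_pos_of_pos ha
  have h3 : 0 < Real.Gamma b := Real.Gamma_pos_of_pos hb
  positivity


lemma betaD_mul_pow_integral {a b : ℝ} (ha : 0 < a) (hb : 0 < b) (n : ℕ) :
    ∫ x, betaD a b x * x ^ n =
      Real.Gamma (a + b) / (Real.Gamma a * Real.Gamma b) *
        (Real.Gamma (a + n) * Real.Gamma b / Real.Gamma (a + n + b)) := by
  have h1 : ∀ x : ℝ, betaD a b x * x ^ n =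
      (Set.Ioo (0:ℝ) 1).indicator
        (fun x => (Real.Gamma (a + b) / (Real.Gamma a * Real.Gamma b)) *
          (x ^ (a + n - 1) * (1 - x) ^ (b - 1))) x := by
    intro x
    unfold betaD
    by_cases hx : x ∈ Set.Ioo (0:ℝ) 1
    · rw [Set.indicator_of_mem hx, Set.indicator_of_mem hx]
      have hx0 : (0:ℝ) < x := hx.1
      have h2 : x ^ (a + (n:ℝ) - 1) = x ^ (a-1) * x ^ (n : ℝ) := by
        rw [← Real.rpow_add hx0]; ring_nf
      rw [h2, Real.rpow_natCast]; ring
    · rw [Set.indicator_of_notMem hx, Set.indicator_of_notMem hx, zero_mul]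
  rw [funext h1, integral_indicator measurableSet_Ioo,
    ← integral_Ioc_eq_integral_Ioo, integral_const_mul]
  have := betaIntegral_real (a := a + n) (b := b) (by positivity) hb
  rw [show a + ↑n - 1 = a + ↑n - 1 from rfl] at this ⊢
  rw [this]

lemma betaD_integrable {a b : ℝ} (ha : 0 < a) (hb : 0 < b) :
    Integrable (betaD a b) volume := by
  unfold betaD
  rw [integrable_indicator_iff measurableSet_Ioo]
  have := ((betaIntegrableOn ha hb).mono_set Set.Ioo_subset_Ioc_self).const_mul
    (Real.Gamma (a + b) / (Real.Gamma a * Real.Gamma b))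
  exact IntegrableOn.congr_fun this (fun x _ => by ring) measurableSet_Ioo

lemma betaM_integral_pow {a b : ℝ} (ha : 0 < a) (hb : 0 < b) (n : ℕ) :
    ∫ x, x ^ n ∂betaM a b =
      Real.Gamma (a + b) / (Real.Gamma a * Real.Gamma b) *
        (Real.Gamma (a + n) * Real.Gamma b / Real.Gamma (a + n + b)) := by
  rw [betaM_eq, integral_withDensity_eq_integral_smul
    ((betaD_measurable a b).real_toNNReal)]
  rw [← betaD_mul_pow_integral ha hb n]
  congr 1 with x
  rw [NNReal.smul_def, Real.coe_toNNReal _ (betaD_nonneg ha hb x), smul_eq_mul]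

lemma isProbabilityMeasure_betaM {a b : ℝ} (ha : 0 < a) (hb : 0 < b) :
    IsProbabilityMeasure (betaM a b) := by
  constructor
  rw [betaM_eq, withDensity_apply _ MeasurableSet.univ, Measure.restrict_univ]
  have h0 : ∀ x, ((betaD a b x).toNNReal : ℝ≥0∞) = ENNReal.ofReal (betaD a b x) := fun x => rfl
  simp_rw [h0]
  rw [← ofReal_integral_eq_lintegral_ofReal (betaD_integrable ha hb)
    (Filter.Eventually.of_forall (betaD_nonneg ha hb))]
  have := betaD_mul_pow_integral ha hb 0
  simp only [pow_zero, mul_one, Nat.cast_zero, add_zero] at this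
  rw [this]
  have h1 : Real.Gamma (a+b) ≠ 0 := (Real.Gamma_pos_of_pos (by linarith)).ne'
  have h2 : Real.Gamma a ≠ 0 := (Real.Gamma_pos_of_pos ha).ne'
  have h3 : Real.Gamma b ≠ 0 := (Real.Gamma_pos_of_pos hb).ne'
  rw [show Real.Gamma (a + b) / (Real.Gamma a * Real.Gamma b) *
      (Real.Gamma a * Real.Gamma b / Real.Gamma (a + b)) = 1 by field_simp]
  simp

lemma betaM_compl_Icc {a b : ℝ} : betaM a b (Set.Icc 0 1)ᶜ = 0 := by
  rw [betaM_eq, withDensity_apply _ measurableSet_Icc.compl]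
  have h : ∀ᵐ x ∂(volume : Measure ℝ), x ∈ (Set.Icc (0:ℝ) 1)ᶜ →
      ((betaD a b x).toNNReal : ℝ≥0∞) = 0 := by
    filter_upwards with x hx
    have hni : x ∉ Set.Ioo (0:ℝ) 1 := fun h => hx (Set.Ioo_subset_Icc_self h)
    simp [betaD, Set.indicator_of_notMem hni]
  rw [setLIntegral_congr_fun_ae measurableSet_Icc.compl h, lintegral_zero]

lemma ext_of_moments {μ ν : Measure ℝ} [IsFiniteMeasure μ] [IsFiniteMeasure ν]
    (hμ : μ (Set.Icc 0 1)ᶜ = 0) (hν : ν (Set.Icc 0 1)ᶜ = 0)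
    (h : ∀ n : ℕ, ∫ x, x ^ n ∂μ = ∫ x, x ^ n ∂ν) : μ = ν := by
  -- a.e. membership in Icc
  have hμae : ∀ᵐ x ∂μ, x ∈ Set.Icc (0:ℝ) 1 := by
    rw [ae_iff, ← Set.compl_def]; exact hμ
  have hνae : ∀ᵐ x ∂ν, x ∈ Set.Icc (0:ℝ) 1 := by
    rw [ae_iff, ← Set.compl_def]; exact hν
  have hresμ : μ.restrict (Set.Icc 0 1) = μ := Measure.restrict_eq_self_of_ae_mem hμae
  have hresν : ν.restrict (Set.Icc 0 1) = ν := Measure.restrict_eq_self_of_ae_mem hνae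
  -- continuous functions are integrable
  have hcont : ∀ (κ : Measure ℝ), IsFiniteMeasure κ → κ.restrict (Set.Icc 0 1) = κ →
      ∀ (f : ℝ → ℝ), Continuous f → Integrable f κ := by
    intro κ hκ hres f hf
    rw [← hres]
    exact hf.continuousOn.integrableOn_compact isCompact_Icc
  -- polynomials have the same integral
  have hpoly : ∀ P : Polynomial ℝ, ∫ x, P.eval x ∂μ = ∫ x, P.eval x ∂ν := by
    intro P
    have he : ∀ x : ℝ, P.eval x = ∑ i ∈ Finset.range (P.natDegree + 1), P.coeff i * x ^ i :=
      fun x => Polynomial.eval_eq_sum_range (p := P) x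
    simp_rw [he]
    rw [integral_finset_sum _ (fun i _ =>
        (hcont μ ‹_› hresμ _ (continuous_pow i)).const_mul (P.coeff i)),
      integral_finset_sum _ (fun i _ =>
        (hcont ν ‹_› hresν _ (continuous_pow i)).const_mul (P.coeff i))]
    · exact Finset.sum_congr rfl fun i _ => by rw [integral_const_mul, integral_const_mul, h i]
  -- bounded continuous functions have the same integral
  have hbcf : ∀ g : ℝ →ᵇ ℝ, ∫ x, g x ∂μ = ∫ x, g x ∂ν := by
    intro g
    set c : ℝ := (μ Set.univ).toReal + (ν Set.univ).toReal with hc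
    have hc0 : 0 ≤ c := by positivity
    have key : ∀ ε : ℝ, 0 < ε → |(∫ x, g x ∂μ) - ∫ x, g x ∂ν| ≤ ε * c := by
      intro ε hε
      -- polynomial approximation on Icc 0 1
      set g' : C(Set.Icc (0:ℝ) 1, ℝ) := ContinuousMap.restrict _ g.toContinuousMap with hg'
      have hmem : g' ∈ closure ((polynomialFunctions (Set.Icc (0:ℝ) 1)) : Set _) := by
        rw [← Subalgebra.topologicalClosure_coe, polynomialFunctions_closure_eq_top]
        trivial
      obtain ⟨p, hpmem, hdist⟩ := Metric.mem_closure_iff.mp hmem ε hε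
      rw [polynomialFunctions_coe] at hpmem
      obtain ⟨P, rfl⟩ := hpmem
      have hptw : ∀ x : Set.Icc (0:ℝ) 1, |g x.1 - P.eval x.1| < ε := by
        intro x
        have := (ContinuousMap.dist_lt_iff hε).mp hdist x
        rwa [Real.dist_eq] at this
      have hbound : ∀ (κ : Measure ℝ), κ (Set.Icc 0 1)ᶜ = 0 → IsFiniteMeasure κ →
          κ.restrict (Set.Icc 0 1) = κ →
          ‖∫ x, (g x - P.eval x) ∂κ‖ ≤ ε * (κ Set.univ).toReal := by
        intro κ hκc hκf hκr
        apply norm_integral_le_of_norm_le_const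
        have hκae : ∀ᵐ x ∂κ, x ∈ Set.Icc (0:ℝ) 1 := by
          rw [ae_iff, ← Set.compl_def]; exact hκc
        filter_upwards [hκae] with x hx
        rw [Real.norm_eq_abs]
        exact (hptw ⟨x, hx⟩).le
      have hgint : ∀ (κ : Measure ℝ), IsFiniteMeasure κ → Integrable (⇑g) κ := by
        intro κ hκ; exact g.integrable κ
      have e1 := hbound μ hμ ‹_› hresμ
      have e2 := hbound ν hν ‹_› hresν
      rw [integral_sub (hgint μ ‹_›) (hcont μ ‹_› hresμ _ (Polynomial.continuous P))] at e1
      rw [integral_sub (hgint ν ‹_›) (hcont ν ‹_› hresν _ (Polynomial.continuous P))] at e2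
      have hPP := hpoly P
      rw [Real.norm_eq_abs] at e1 e2
      have habs := abs_sub (G := ℝ)
      calc |(∫ x, g x ∂μ) - ∫ x, g x ∂ν|
          = |((∫ x, g x ∂μ) - ∫ x, P.eval x ∂μ) - ((∫ x, g x ∂ν) - ∫ x, P.eval x ∂ν)| := by
            rw [hPP]; ring_nf
        _ ≤ |(∫ x, g x ∂μ) - ∫ x, P.eval x ∂μ| + |(∫ x, g x ∂ν) - ∫ x, P.eval x ∂ν| :=
            abs_sub _ _
        _ ≤ ε * (μ Set.univ).toReal + ε * (ν Set.univ).toReal := add_le_add e1 e2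
        _ = ε * c := by rw [hc]; ring
    have : |(∫ x, g x ∂μ) - ∫ x, g x ∂ν| = 0 := by
      by_contra h0
      have hpos : 0 < |(∫ x, g x ∂μ) - ∫ x, g x ∂ν| := (abs_nonneg _).lt_of_ne (Ne.symm h0)
      have hk := key (|(∫ x, g x ∂μ) - ∫ x, g x ∂ν| / (2 * (c + 1))) (by positivity)
      set A := |(∫ x, g x ∂μ) - ∫ x, g x ∂ν| with hA
      have hlt : A / (2 * (c + 1)) * c < A := by
        rw [div_mul_eq_mul_div, div_lt_iff₀ (by positivity)]
        nlinarith
      linarith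
    have := abs_eq_zero.mp this
    linarith [this]
  -- conclude via lintegrals of nonneg bounded continuous functions
  apply ext_of_forall_lintegral_eq_of_IsFiniteMeasure
  intro f
  have hi1 : Integrable (((↑) : ℝ≥0 → ℝ) ∘ ⇑f) μ := f.integrable_of_nnreal μ
  have hi2 : Integrable (((↑) : ℝ≥0 → ℝ) ∘ ⇑f) ν := f.integrable_of_nnreal ν
  rw [lintegral_coe_eq_integral _ hi1, lintegral_coe_eq_integral _ hi2]
  congr 1
  -- the real-valued version as a bounded continuous function
  exact hbcf (BoundedContinuousFunction.comp ((↑) : ℝ≥0 → ℝ)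
    (Isometry.lipschitz (fun x y => rfl)) f)

/-- If `β_{p,q}` and `β_{p+q,r}` are independent Beta random variables, their product
is Beta distributed with parameters `(p, q+r)`. -/
theorem beta_mul_beta {Ω : Type*} [MeasurableSpace Ω] (P : Measure Ω) [IsProbabilityMeasure P]
    (p q r : ℝ) (hp : 0 < p) (hq : 0 < q) (hr : 0 < r)
    (X Y : Ω → ℝ)
    (hX : Measure.map X P = betaM p q)
    (hY : Measure.map Y P = betaM (p + q) r)
    (hindep : IndepFun X Y P) :
    Measure.map (fun ω => X ω * Y ω) P = betaM p (q + r) := by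
  have hpq : 0 < p + q := by linarith
  have hqr : 0 < q + r := by linarith
  haveI h1 : IsProbabilityMeasure (betaM p q) := isProbabilityMeasure_betaM hp hq
  haveI h2 : IsProbabilityMeasure (betaM (p + q) r) := isProbabilityMeasure_betaM hpq hr
  haveI h3 : IsProbabilityMeasure (betaM p (q + r)) := isProbabilityMeasure_betaM hp hqr
  have aemX : AEMeasurable X P := by
    by_contra hc
    rw [Measure.map_of_not_aemeasurable hc] at hX
    have := h1.measure_univ
    rw [← hX] at this
    simp at this
  have aemY : AEMeasurable Y P := by
    by_contra hc
    rw [Measure.map_of_not_aemeasurable hc] at hY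
    have := h2.measure_univ
    rw [← hY] at this
    simp at this
  have hmulm : Measurable (fun z : ℝ × ℝ => z.1 * z.2) := measurable_fst.mul measurable_snd
  have hpair : P.map (fun ω => (X ω, Y ω)) = (betaM p q).prod (betaM (p + q) r) := by
    have := (indepFun_iff_map_prod_eq_prod_map_map aemX aemY).mp hindep
    rw [hX, hY] at this
    exact this
  have hmul : Measure.map (fun ω => X ω * Y ω) P =
      Measure.map (fun z : ℝ × ℝ => z.1 * z.2) ((betaM p q).prod (betaM (p + q) r)) := by
    rw [← hpair, AEMeasurable.map_map_of_aemeasurable hmulm.aemeasurable (aemX.prodMk aemY)]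
    rfl
  set pm : Measure (ℝ × ℝ) := (betaM p q).prod (betaM (p + q) r) with hpm
  rw [hmul]
  haveI : IsProbabilityMeasure pm := by infer_instance
  haveI : IsProbabilityMeasure (Measure.map (fun z : ℝ × ℝ => z.1 * z.2) pm) :=
    Measure.isProbabilityMeasure_map hmulm.aemeasurable
  apply ext_of_moments
  · -- support
    rw [Measure.map_apply hmulm measurableSet_Icc.compl]
    have hsub : (fun z : ℝ × ℝ => z.1 * z.2) ⁻¹' (Set.Icc 0 1)ᶜ ⊆
        ((Set.Icc (0:ℝ) 1)ᶜ ×ˢ Set.univ) ∪ (Set.univ ×ˢ (Set.Icc (0:ℝ) 1)ᶜ) := by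
      intro z hz
      have hz' : z.1 * z.2 ∉ Set.Icc (0:ℝ) 1 := hz
      by_cases h1 : z.1 ∈ Set.Icc (0:ℝ) 1
      · by_cases h2 : z.2 ∈ Set.Icc (0:ℝ) 1
        · exact absurd (Set.mem_Icc.mpr ⟨mul_nonneg h1.1 h2.1,
            mul_le_one₀ h1.2 h2.1 h2.2⟩) hz'
        · exact Or.inr ⟨trivial, h2⟩
      · exact Or.inl ⟨h1, trivial⟩
    refine le_antisymm ?_ zero_le
    refine le_trans (measure_mono hsub) ?_
    refine le_trans (measure_union_le _ _) ?_
    rw [hpm, Measure.prod_prod, Measure.prod_prod, betaM_compl_Icc, betaM_compl_Icc]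
    simp
  · exact betaM_compl_Icc
  · intro n
    rw [integral_map hmulm.aemeasurable (continuous_pow n).aestronglyMeasurable]
    simp_rw [mul_pow]
    rw [hpm, integral_prod_mul (f := fun x : ℝ => x ^ n) (g := fun y : ℝ => y ^ n)]
    rw [betaM_integral_pow hp hq n, betaM_integral_pow hpq hr n, betaM_integral_pow hp hqr n]
    have G := fun (x : ℝ) (hx : 0 < x) => (Real.Gamma_pos_of_pos hx).ne'
    have e1 : p + ↑n + q = p + q + ↑n := by ring
    have e2 : p + q + ↑n + r = p + ↑n + (q + r) := by ring
    have e3 : p + (q + r) = p + q + r := by ring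
    rw [e1, e2, e3]
    have n0 : (0:ℝ) ≤ n := Nat.cast_nonneg n
    field_simp [G p hp, G q hq, G r hr, G (p+q) hpq, G (q+r) hqr,
      G (p+q+r) (by linarith), G (p+q+↑n) (by linarith), G (p+↑n+(q+r)) (by linarith),
      G (p+↑n) (by linarith)]
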